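/- Let P be a graded structure of rank d with h-numbers h_0,...,h_d and suppose h_0 = 1, and the link h-number identity ∑_{v ∈ V} h_{i-1}(lk(v)) = i*h_i + (d-i+1)*h_{i-1} holds for 1 ≤ i ≤ d, where |V| = d and each link satisfies h_j(lk(v)) = C(d-1,j) if j = 0 or j = k and 0 otherwise (for fixed 0 < k < d). Then h_i = 0 for 0 < i ≤ k and h_i = (-1)^{i-k+1} * C(d,i) for k < i ≤ d. -/

import Mathlib

/-- Given `0 < k < d`, a sequence `h` with `h 0 = 1`, satisfying the short simplicial
`h`-vector relation `L(i) = i·h_i + (d-i+1)·h_{i-1}` for `1 ≤ i ≤ d`, where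
`L(i) = d·C(d-1,i-1)` if `i-1 ∈ {0,k}` and `L(i) = 0` otherwise, we conclude
`h_i = 0` for `0 < i ≤ k` and `h_i = (-1)^{i-k+1}·C(d,i)` for `k < i ≤ d`. -/
theorem stmt9 (d k : ℕ) (hk : 0 < k) (hkd : k < d) (h : ℕ → ℚ) (h0 : h 0 = 1)
    (hrel : ∀ i, 1 ≤ i → i ≤ d →
      (if i - 1 = 0 ∨ i - 1 = k then (d : ℚ) * ((d - 1).choose (i - 1) : ℚ) else 0) =
        (i : ℚ) * h i + ((d : ℚ) - (i : ℚ) + 1) * h (i - 1)) :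
    (∀ i, 0 < i → i ≤ k → h i = 0) ∧
      (∀ i, k < i → i ≤ d → h i = (-1) ^ (i - k + 1) * (d.choose i : ℚ)) := by
  have hzero : ∀ i, 0 < i → i ≤ k → h i = 0 := by
    intro i
    induction i with
    | zero => omega
    | succ n ih =>
      intro _ hle
      rcases Nat.eq_zero_or_pos n with hn0 | hn0
      · subst hn0
        have := hrel 1 le_rfl (by omega)
        simp at this
        have hd : (d:ℚ) = 1 * h 1 + ((d:ℚ) - 1 + 1) * h 0 := by
          simpa using this
        rw [h0] at hd
        linarith
      · have hprev : h n = 0 := ih hn0 (by omega)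
        have := hrel (n+1) (by omega) (by omega)
        have hc : ¬ (n + 1 - 1 = 0 ∨ n + 1 - 1 = k) := by omega
        rw [if_neg hc] at this
        simp only [Nat.add_sub_cancel] at this
        rw [hprev] at this
        have hne : ((n:ℚ) + 1) ≠ 0 := by positivity
        have : ((n:ℚ)+1) * h (n+1) = 0 := by push_cast at this ⊢; linarith
        exact (mul_eq_zero.mp this).resolve_left hne
  refine ⟨hzero, ?_⟩
  intro i
  induction i with
  | zero => omega
  | succ n ih =>
    intro hki hid
    have hne : ((n:ℚ) + 1) ≠ 0 := by positivity
    rcases Nat.lt_or_ge k n with hkn | hkn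
    · -- step case: n > k
      have hprev : h n = (-1) ^ (n - k + 1) * (d.choose n : ℚ) := ih hkn (by omega)
      have hpn : h n = -((-1:ℚ)^(n-k) * (d.choose n : ℚ)) := by
        rw [hprev, pow_succ]; ring
      have hr := hrel (n+1) (by omega) (by omega)
      have hc : ¬ (n + 1 - 1 = 0 ∨ n + 1 - 1 = k) := by omega
      rw [if_neg hc] at hr
      simp only [Nat.add_sub_cancel] at hr
      rw [hpn] at hr
      push_cast at hr
      have hch : (d.choose (n+1) : ℚ) * ((n:ℚ)+1) = (d.choose n : ℚ) * ((d:ℚ) - (n:ℚ)) := by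
        have h2 := Nat.choose_succ_right_eq d n
        have h3 : ((d.choose (n+1) * (n+1) : ℕ) : ℚ) = ((d.choose n * (d - n) : ℕ) : ℚ) := by
          exact_mod_cast congrArg (fun x : ℕ => (x:ℚ)) h2
        push_cast [Nat.cast_sub (by omega : n ≤ d)] at h3
        linarith
      have hpow : (-1:ℚ)^(n+1-k+1) = (-1:ℚ)^(n-k) := by
        rw [show n+1-k+1 = n-k+2 by omega, pow_add]; norm_num
      rw [hpow]
      have key : ((n:ℚ)+1) * h (n+1) = ((n:ℚ)+1) * ((-1:ℚ)^(n-k) * (d.choose (n+1) : ℚ)) := by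
        linear_combination (-1:ℚ) * hr + (-(-1:ℚ)^(n-k)) * hch
      exact mul_left_cancel₀ hne key
    · -- base case: n = k
      have hnk : n = k := by omega
      have hr := hrel (n+1) (by omega) (by omega)
      have hc : (n + 1 - 1 = 0 ∨ n + 1 - 1 = k) := by omega
      rw [if_pos hc] at hr
      simp only [Nat.add_sub_cancel] at hr
      rw [hzero n (by omega) (by omega)] at hr
      push_cast at hr
      have hch : ((n:ℚ)+1) * (d.choose (n+1) : ℚ) = (d:ℚ) * ((d-1).choose n : ℚ) := by
        have h2 := Nat.add_one_mul_choose_eq (d-1) n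
        have hd1 : d - 1 + 1 = d := by omega
        rw [hd1] at h2
        have h3 : ((d * (d-1).choose n : ℕ) : ℚ) = ((d.choose (n+1) * (n+1) : ℕ) : ℚ) := by
          exact_mod_cast congrArg (fun x : ℕ => (x:ℚ)) h2
        push_cast at h3
        linarith
      have hpow : n + 1 - k + 1 = 2 := by omega
      rw [hpow]
      have key : ((n:ℚ)+1) * h (n+1) = ((n:ℚ)+1) * ((-1:ℚ)^2 * (d.choose (n+1) : ℚ)) := by
        linear_combination -hr - hch
      exact mul_left_cancel₀ hne key
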